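/- Under the garbage-collection heap separation, the shared/owned repartition function preserves the heap: if readjust(s, o, h') = (s', o') for a heap h' with dom(s ⊎ o) = dom(h'), then s' ⊎ o' = h', dom(s') = dom(s) ∪ Pub and dom(o') = dom(o) \ Pub, where Pub is the set of all cells of records reachable from the shared pointer variables in h'; in particular dom(s) ⊆ dom(s') (shared cells stay shared) and the resulting state is separated. -/

import Mathlib

namespace PaperGC

/-- Heaps: partial maps from variables and addresses to naturals. -/
abbrev Heap := (String ⊕ ℕ) → Option ℕ

/-- Domain of a heap. -/
def dom (h : Heap) : Set (String ⊕ ℕ) := {x | h x ≠ none}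

open Classical

/-- Restriction of a heap to a set of keys. -/
noncomputable def restrict (h : Heap) (D : Set (String ⊕ ℕ)) : Heap :=
  fun x => if x ∈ D then h x else none

/-- Union of two heaps (left-biased; used on disjoint heaps). -/
def hunion (s o : Heap) : Heap := fun x => (s x).orElse (fun _ => o x)

/-- Addresses of records reachable from the shared pointer variables `Vsh`
following the first `m` (pointer) selectors: the least fixed point
  S₀ = {a | ∃ x ∈ Vsh, h(x) = a},
  S_{i+1} = S_i ∪ {b | ∃ a ∈ S_i, ∃ k < m, h(a+k) = b}. -/
inductive RecShared (Vsh : Set String) (m : ℕ) (h : Heap) : ℕ → Prop where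
  | base {x a} : x ∈ Vsh → h (Sum.inl x) = some a → RecShared Vsh m h a
  | step {a k b} : RecShared Vsh m h a → k < m →
      h (Sum.inr (a + k)) = some b → RecShared Vsh m h b

/-- All cells `a+0, …, a+n` of shared records: the published cells. -/
def Pub (Vsh : Set String) (m n : ℕ) (h : Heap) : Set (String ⊕ ℕ) :=
  {x | ∃ a j, RecShared Vsh m h a ∧ j ≤ n ∧ x = Sum.inr (a + j)}

/-- `readjust(s, o, h')` splits the updated heap `h'` into the new shared part
(domain `dom s ∪ Pub`) and the new owned part (domain `dom o \ Pub`). -/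
noncomputable def readjust (Vsh : Set String) (m n : ℕ) (s o h' : Heap) :
    Heap × Heap :=
  (restrict h' (dom s ∪ Pub Vsh m n h'),
   restrict h' (dom o \ Pub Vsh m n h'))

/-- the shared/owned repartition preserves the heap, shared
cells stay shared, and the result is separated. -/
theorem readjust_spec (Vsh : Set String) (m n : ℕ) (s o h' : Heap)
    (hdisj : dom s ∩ dom o = ∅)
    (hdom : dom s ∪ dom o = dom h')
    (hpub : Pub Vsh m n h' ⊆ dom h') :
    hunion (readjust Vsh m n s o h').1 (readjust Vsh m n s o h').2 = h' ∧
    dom (readjust Vsh m n s o h').1 = dom s ∪ Pub Vsh m n h' ∧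
    dom (readjust Vsh m n s o h').2 = dom o \ Pub Vsh m n h' ∧
    dom s ⊆ dom (readjust Vsh m n s o h').1 ∧
    dom (readjust Vsh m n s o h').1 ∩ dom (readjust Vsh m n s o h').2 = ∅ := by

  classical
  set P := Pub Vsh m n h'
  have hdomr : ∀ D : Set (String ⊕ ℕ), dom (restrict h' D) = D ∩ dom h' := by
    intro D; ext x; simp [dom, restrict]
  have hsub : dom s ⊆ dom h' := hdom ▸ Set.subset_union_left
  have hosub : dom o ⊆ dom h' := hdom ▸ Set.subset_union_right
  refine ⟨?_, ?_, ?_, ?_, ?_⟩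
  · funext x
    simp only [readjust, hunion, restrict]
    by_cases h1 : x ∈ dom s ∪ P
    · rw [if_pos h1]
      cases hx : h' x with
      | none => simp [hx]
      | some v => simp [hx]
    · rw [if_neg h1]
      by_cases h2 : x ∈ dom o \ P
      · simp [show x ∈ dom o \ Pub Vsh m n h' from h2]
      · rw [if_neg h2]
        cases hx : h' x with
        | none => simp [hx]
        | some v =>
          exfalso
          have : x ∈ dom h' := by simp [dom, hx]
          rw [← hdom] at this
          rcases this with hs | ho
          · exact h1 (Or.inl hs)
          · exact h2 ⟨ho, fun hp => h1 (Or.inr hp)⟩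
  · rw [show (readjust Vsh m n s o h').1 = restrict h' (dom s ∪ P) from rfl, hdomr]
    apply Set.inter_eq_left.mpr
    exact Set.union_subset hsub hpub
  · rw [show (readjust Vsh m n s o h').2 = restrict h' (dom o \ P) from rfl, hdomr]
    apply Set.inter_eq_left.mpr
    exact fun x hx => hosub hx.1
  · rw [show (readjust Vsh m n s o h').1 = restrict h' (dom s ∪ P) from rfl, hdomr]
    exact fun x hx => ⟨Or.inl hx, hsub hx⟩
  · rw [show (readjust Vsh m n s o h').1 = restrict h' (dom s ∪ P) from rfl,
      show (readjust Vsh m n s o h').2 = restrict h' (dom o \ P) from rfl, hdomr, hdomr]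
    apply Set.eq_empty_iff_forall_notMem.mpr
    rintro x ⟨⟨hsp, _⟩, ⟨ho, hnp⟩, _⟩
    rcases hsp with hsp | hp
    · exact absurd (Set.mem_inter hsp ho) (by simp [hdisj])
    · exact hnp hp


end PaperGC
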